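/- Let $a_1,\dots,a_n$ be independent Bernoulli($\theta_i$) random variables and set $\xi_i=a_i-\theta_i$. Then for any real matrix $A$ with $n$ columns and any $t>0$, $\mathbb{P}\big(\|A\xi\|_2^2 > \tfrac{1}{2}\|A\|_F^2 + \tfrac{3t}{4}\|A\|_{op}^2\big) \le e^{-t}$. -/

import Mathlib

open MeasureTheory ProbabilityTheory Real Matrix

set_option maxHeartbeats 1000000


/-- Scalar inequality: `exp (-2x) ≤ 1 - x` for `0 ≤ x ≤ 2/3`. -/
lemma aux_exp_neg_two_mul {x : ℝ} (hx0 : 0 ≤ x) (hx : x ≤ 2/3) :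
    Real.exp (-(2*x)) ≤ 1 - x := by
  have hexp : 1 + 2*x + 2*x^2 ≤ Real.exp (2*x) := by
    have := Real.sum_le_exp_of_nonneg (x := 2*x) (by linarith) 3
    simp [Finset.sum_range_succ] at this
    nlinarith [this]
  have hpos : (0:ℝ) < 1 + 2*x + 2*x^2 := by nlinarith
  have h1 : Real.exp (-(2*x)) ≤ 1 / (1 + 2*x + 2*x^2) := by
    rw [Real.exp_neg]
    rw [inv_le_iff_one_le_mul₀ (Real.exp_pos _)] at *
    · rw [div_mul_eq_mul_div, le_div_iff₀ hpos]
      nlinarith [hexp]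
  calc Real.exp (-(2*x)) ≤ 1 / (1 + 2*x + 2*x^2) := h1
    _ ≤ 1 - x := by
      rw [div_le_iff₀ hpos]
      nlinarith

/-- `1/√(1-x) ≤ √(2π) ... ` factor bound -/
lemma aux_sqrt_factor {x : ℝ} (hx0 : 0 ≤ x) (hx : x ≤ 2/3) :
    Real.sqrt (2*π) / Real.sqrt (1 - x) ≤ Real.sqrt (2*π) * Real.exp x := by
  have h1 : Real.exp (-x) ≤ Real.sqrt (1 - x) := by
    have h2 : Real.exp (-x) = Real.sqrt (Real.exp (-(2*x))) := by
      rw [show -(2*x) = (-x) + (-x) by ring, Real.exp_add,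
        Real.sqrt_mul_self (Real.exp_pos _).le]
    rw [h2]
    exact Real.sqrt_le_sqrt (aux_exp_neg_two_mul hx0 hx)
  have hsp : (0:ℝ) < Real.exp (-x) := Real.exp_pos _
  calc Real.sqrt (2*π) / Real.sqrt (1-x) ≤ Real.sqrt (2*π) / Real.exp (-x) := by
        gcongr
    _ = Real.sqrt (2*π) * Real.exp x := by rw [Real.exp_neg, div_inv_eq_mul]



/-- **Hoeffding's lemma** for a centered Bernoulli-type two point distribution. -/
lemma hoeffding_two_point {θ : ℝ} (h0 : 0 ≤ θ) (h1 : θ ≤ 1) (z : ℝ) :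
    (1 - θ) * Real.exp (-(z*θ)) + θ * Real.exp (z*(1-θ)) ≤ Real.exp (z^2/8) := by
  set u : ℝ → ℝ := fun y => 1 - θ + θ * Real.exp y with hu_def
  have hu : ∀ y, 0 < u y := by
    intro y
    rcases h0.eq_or_lt with h|h
    · simp [hu_def, ← h]
    · have := Real.exp_pos y
      have : 0 < θ * Real.exp y := mul_pos h this
      have h1θ : 0 ≤ 1 - θ := by linarith
      simp only [hu_def]; linarith
  set f : ℝ → ℝ := fun y => Real.log (u y) - y * θ with hf_def
  set D : ℝ → ℝ := fun y => θ * Real.exp y / u y - θ with hD_def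
  have hu' : ∀ y, HasDerivAt u (θ * Real.exp y) y := by
    intro y
    exact ((Real.hasDerivAt_exp y).const_mul θ).const_add (1 - θ)
  have hf' : ∀ y, HasDerivAt f (D y) y := by
    intro y
    have := ((hu' y).log (hu y).ne').sub ((hasDerivAt_id y).mul_const θ)
    exact this.congr_deriv (by simp only [hD_def]; ring)
  have hD' : ∀ y, HasDerivAt D (θ * Real.exp y * (1-θ) / (u y)^2) y := by
    intro y
    have h := (((Real.hasDerivAt_exp y).const_mul θ).div (hu' y) (hu y).ne').sub_const θ
    refine h.congr_deriv ?_
    have huy : u y = 1 - θ + θ * Real.exp y := rfl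
    rw [huy]; ring
  have hD2 : ∀ y, θ * Real.exp y * (1-θ) / (u y)^2 ≤ 1/4 := by
    intro y
    rw [div_le_iff₀ (pow_pos (hu y) 2)]
    have : u y = 1 - θ + θ * Real.exp y := rfl
    nlinarith [sq_nonneg (1 - θ - θ * Real.exp y)]
  -- h y := y/4 - D y is monotone
  set h : ℝ → ℝ := fun y => y/4 - D y with hh_def
  have hh' : ∀ y, HasDerivAt h (1/4 - θ * Real.exp y * (1-θ) / (u y)^2) y := by
    intro y
    exact ((hasDerivAt_id y).div_const 4).sub (hD' y)
  have hhmono : Monotone h := by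
    apply monotone_of_deriv_nonneg
    · exact fun y => (hh' y).differentiableAt
    · intro y
      rw [(hh' y).deriv]
      linarith [hD2 y]
  have hh0 : h 0 = 0 := by simp [hh_def, hD_def, hu_def]
  -- F y := y^2/8 - f y
  set F : ℝ → ℝ := fun y => y^2/8 - f y with hF_def
  have hF' : ∀ y, HasDerivAt F (h y) y := by
    intro y
    have : HasDerivAt (fun y : ℝ => y^2/8) (y/4) y := by
      have := (hasDerivAt_pow 2 y).div_const 8
      simp only [Nat.cast_ofNat, pow_one] at this
      exact this.congr_deriv (by norm_num; ring)
    exact this.sub (hf' y)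
  have hF0 : F 0 = 0 := by simp [hF_def, hf_def, hu_def]
  have hdiff : Differentiable ℝ F := fun y => (hF' y).differentiableAt
  have hFnn : ∀ y, 0 ≤ F y := by
    intro y
    rcases le_total 0 y with hy|hy
    · have : MonotoneOn F (Set.Ici 0) := by
        apply monotoneOn_of_deriv_nonneg (convex_Ici 0) hdiff.continuous.continuousOn
          (fun x _ => (hdiff x).differentiableWithinAt)
        intro x hx
        rw [(hF' x).deriv]
        have : (0:ℝ) ≤ x := le_of_lt (by simpa using hx)
        calc (0:ℝ) = h 0 := hh0.symm
          _ ≤ h x := hhmono this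
      have := this (Set.mem_Ici.mpr le_rfl) (Set.mem_Ici.mpr hy) hy
      rwa [hF0] at this
    · have : AntitoneOn F (Set.Iic 0) := by
        apply antitoneOn_of_deriv_nonpos (convex_Iic 0) hdiff.continuous.continuousOn
          (fun x _ => (hdiff x).differentiableWithinAt)
        intro x hx
        rw [(hF' x).deriv]
        have hx0 : x ≤ (0:ℝ) := le_of_lt (by simpa using hx)
        calc h x ≤ h 0 := hhmono hx0
          _ = 0 := hh0
      have := this (Set.mem_Iic.mpr hy) (Set.mem_Iic.mpr le_rfl) hy
      rwa [hF0] at this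
  have hfz : f z ≤ z^2/8 := by have := hFnn z; simp only [hF_def] at this; linarith
  have key : (1 - θ) * Real.exp (-(z*θ)) + θ * Real.exp (z*(1-θ)) = Real.exp (f z) := by
    show _ = Real.exp (Real.log (u z) - z * θ)
    rw [Real.exp_sub, Real.exp_log (hu z), eq_div_iff (Real.exp_pos _).ne']
    have e1 : Real.exp (-(z*θ)) * Real.exp (z*θ) = 1 := by
      rw [← Real.exp_add]; norm_num
    have e2 : Real.exp (z*(1-θ)) * Real.exp (z*θ) = Real.exp z := by
      rw [← Real.exp_add]; congr 1; ring
    calc ((1-θ) * Real.exp (-(z*θ)) + θ * Real.exp (z*(1-θ))) * Real.exp (z*θ)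
        = (1-θ) * (Real.exp (-(z*θ)) * Real.exp (z*θ))
          + θ * (Real.exp (z*(1-θ)) * Real.exp (z*θ)) := by ring
      _ = 1 - θ + θ * Real.exp z := by rw [e1, e2]; ring
      _ = u z := rfl
  rw [key]
  exact Real.exp_le_exp.mpr hfz



section prob
variable {Ω : Type*} [MeasureSpace Ω] [IsProbabilityMeasure (ℙ : Measure Ω)]
    {n : ℕ} {a : Fin n → Ω → ℝ} {θ : Fin n → ℝ}

lemma theta_mem (hθ : ∀ i, (ℙ {ω | a i ω = 1}).toReal = θ i) (i : Fin n) :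
    0 ≤ θ i ∧ θ i ≤ 1 := by
  constructor
  · rw [← hθ i]; exact ENNReal.toReal_nonneg
  · rw [← hθ i]
    have h := prob_le_one (μ := (ℙ : Measure Ω)) (s := {ω | a i ω = 1})
    simpa using ENNReal.toReal_mono ENNReal.one_ne_top h

lemma xi_abs_le (hval : ∀ i ω, a i ω = 0 ∨ a i ω = 1)
    (hθ : ∀ i, (ℙ {ω | a i ω = 1}).toReal = θ i) (i : Fin n) (ω : Ω) :
    |a i ω - θ i| ≤ 1 := by
  obtain ⟨h0, h1⟩ := theta_mem hθ i
  rcases hval i ω with h|h <;> rw [h, abs_le] <;> constructor <;> linarith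

lemma integral_a (hmeas : ∀ i, Measurable (a i)) (hval : ∀ i ω, a i ω = 0 ∨ a i ω = 1)
    (hθ : ∀ i, (ℙ {ω | a i ω = 1}).toReal = θ i) (i : Fin n) :
    ∫ ω, a i ω = θ i := by
  have hs : MeasurableSet {ω | a i ω = 1} := (hmeas i) (measurableSet_singleton 1)
  have hpt : ∀ ω, a i ω = Set.indicator {ω | a i ω = 1} (fun _ => (1:ℝ)) ω := by
    intro ω
    rcases hval i ω with h|h
    · rw [h, Set.indicator_of_notMem]
      simp [Set.mem_setOf_eq, h]
    · rw [h, Set.indicator_of_mem]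
      exact h
  calc ∫ ω, a i ω = ∫ ω, Set.indicator {ω | a i ω = 1} (fun _ => (1:ℝ)) ω := by
        exact integral_congr_ae (ae_of_all _ hpt)
    _ = (ℙ {ω | a i ω = 1}).toReal := by
        rw [show (fun _ : Ω => (1:ℝ)) = 1 from rfl, integral_indicator_one hs, measureReal_def]
    _ = θ i := hθ i

lemma integrable_a (hmeas : ∀ i, Measurable (a i)) (hval : ∀ i ω, a i ω = 0 ∨ a i ω = 1)
    (i : Fin n) : Integrable (a i) (ℙ : Measure Ω) := by
  refine Integrable.mono' (integrable_const 1) (hmeas i).aestronglyMeasurable ?_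
  filter_upwards with ω
  rcases hval i ω with h|h <;> simp [h]

lemma integral_exp_single (hmeas : ∀ i, Measurable (a i))
    (hval : ∀ i ω, a i ω = 0 ∨ a i ω = 1)
    (hθ : ∀ i, (ℙ {ω | a i ω = 1}).toReal = θ i) (i : Fin n) (c : ℝ) :
    ∫ ω, Real.exp (c * (a i ω - θ i)) ≤ Real.exp (c^2/8) := by
  obtain ⟨h0, h1⟩ := theta_mem hθ i
  have hpt : ∀ ω, Real.exp (c * (a i ω - θ i))
      = (1 - a i ω) * Real.exp (-(c * θ i)) + a i ω * Real.exp (c * (1 - θ i)) := by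
    intro ω
    rcases hval i ω with h|h <;> rw [h] <;> ring_nf
  have hint : Integrable (a i) (ℙ : Measure Ω) := integrable_a hmeas hval i
  calc ∫ ω, Real.exp (c * (a i ω - θ i))
      = ∫ ω, ((1 - a i ω) * Real.exp (-(c * θ i)) + a i ω * Real.exp (c * (1 - θ i))) :=
        integral_congr_ae (ae_of_all _ hpt)
    _ = (1 - θ i) * Real.exp (-(c * θ i)) + θ i * Real.exp (c * (1 - θ i)) := by
        have I1 : Integrable (fun ω => (1 - a i ω) * Real.exp (-(c * θ i))) (ℙ : Measure Ω) := by
          have := ((integrable_const (1:ℝ)).sub hint).mul_const (Real.exp (-(c * θ i)))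
          simpa using this
        have I2 : Integrable (fun ω => a i ω * Real.exp (c * (1 - θ i))) (ℙ : Measure Ω) :=
          hint.mul_const _
        rw [integral_add I1 I2, integral_mul_const, integral_mul_const]
        have I3 : ∫ ω, (1 - a i ω) ∂(ℙ : Measure Ω) = 1 - θ i := by
          have := integral_sub (integrable_const (1:ℝ)) hint (μ := (ℙ : Measure Ω))
          rw [this, integral_const, integral_a hmeas hval hθ i]
          simp
        rw [I3, integral_a hmeas hval hθ i]
    _ ≤ Real.exp (c^2/8) := hoeffding_two_point h0 h1 c

lemma integral_exp_linear_le (hmeas : ∀ i, Measurable (a i))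
    (hindep : iIndepFun a ℙ)
    (hval : ∀ i ω, a i ω = 0 ∨ a i ω = 1)
    (hθ : ∀ i, (ℙ {ω | a i ω = 1}).toReal = θ i) (z : Fin n → ℝ) :
    ∫ ω, Real.exp (∑ i, z i * (a i ω - θ i)) ≤ Real.exp (∑ i, (z i)^2 / 8) := by
  set Y : Fin n → Ω → ℝ := fun i ω => z i * (a i ω - θ i) with hY
  have hYmeas : ∀ i, Measurable (Y i) := fun i => ((hmeas i).sub_const (θ i)).const_mul (z i)
  have hYindep : iIndepFun Y ℙ := by
    have := hindep.comp (fun i x => z i * (x - θ i))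
      (fun i => (measurable_id.sub_const (θ i)).const_mul (z i))
    exact this
  have hmgf := hYindep.mgf_sum (t := 1) hYmeas Finset.univ
  have h1 : ∫ ω, Real.exp (∑ i, z i * (a i ω - θ i)) = mgf (∑ i, Y i) ℙ 1 := by
    simp [mgf, one_mul, Finset.sum_apply, hY]
  rw [h1, hmgf]
  calc ∏ i, mgf (Y i) ℙ 1 ≤ ∏ i, Real.exp ((z i)^2/8) := by
        apply Finset.prod_le_prod (fun i _ => mgf_nonneg)
        intro i _
        have : mgf (Y i) ℙ 1 = ∫ ω, Real.exp (z i * (a i ω - θ i)) := by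
          simp [mgf, one_mul, hY]
        rw [this]
        exact integral_exp_single hmeas hval hθ i (z i)
    _ = Real.exp (∑ i, (z i)^2/8) := by rw [← Real.exp_sum]

lemma integrable_exp_linear (hmeas : ∀ i, Measurable (a i))
    (hval : ∀ i ω, a i ω = 0 ∨ a i ω = 1)
    (hθ : ∀ i, (ℙ {ω | a i ω = 1}).toReal = θ i) (z : Fin n → ℝ) :
    Integrable (fun ω => Real.exp (∑ i, z i * (a i ω - θ i))) (ℙ : Measure Ω) := by
  refine Integrable.mono' (integrable_const (Real.exp (∑ i, |z i|)))
    ?_ ?_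
  · exact (Real.measurable_exp.comp (Finset.measurable_sum _
      (fun i _ => ((hmeas i).sub_const (θ i)).const_mul (z i)))).aestronglyMeasurable
  · filter_upwards with ω
    rw [Real.norm_eq_abs, abs_of_pos (Real.exp_pos _), Real.exp_le_exp]
    apply Finset.sum_le_sum
    intro i _
    calc z i * (a i ω - θ i) ≤ |z i * (a i ω - θ i)| := le_abs_self _
      _ = |z i| * |a i ω - θ i| := abs_mul _ _
      _ ≤ |z i| * 1 := by
          apply mul_le_mul_of_nonneg_left (xi_abs_le hval hθ i ω) (abs_nonneg _)
      _ = |z i| := mul_one _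

lemma lintegral_exp_linear_le (hmeas : ∀ i, Measurable (a i))
    (hindep : iIndepFun a ℙ)
    (hval : ∀ i ω, a i ω = 0 ∨ a i ω = 1)
    (hθ : ∀ i, (ℙ {ω | a i ω = 1}).toReal = θ i) (z : Fin n → ℝ) :
    ∫⁻ ω, ENNReal.ofReal (Real.exp (∑ i, z i * (a i ω - θ i))) ∂ℙ
      ≤ ENNReal.ofReal (Real.exp (∑ i, (z i)^2 / 8)) := by
  rw [← ofReal_integral_eq_lintegral_ofReal (integrable_exp_linear hmeas hval hθ z)
    (ae_of_all _ fun ω => (Real.exp_pos _).le)]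
  exact ENNReal.ofReal_le_ofReal (integral_exp_linear_le hmeas hindep hval hθ z)

end prob


lemma gauss_base : ∫ x : ℝ, Real.exp (-(x^2)/2) = Real.sqrt (2*π) := by
  have h : ∀ x : ℝ, Real.exp (-(x^2)/2) = Real.exp (-(1/2) * x^2) := by
    intro x; congr 1; ring
  simp_rw [h, integral_gaussian]
  congr 1
  rw [div_div_eq_mul_div, div_one]
  ring

lemma gauss_base_integrable : Integrable (fun x : ℝ => Real.exp (-(x^2)/2)) := by
  have := integrable_exp_neg_mul_sq (show (0:ℝ) < 1/2 by norm_num)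
  apply this.congr
  filter_upwards with x
  congr 1; ring

lemma gauss_sq_integral {s : ℝ} (hs : s < 1/2) :
    ∫ x : ℝ, Real.exp (-(x^2)/2 + s*x^2) = Real.sqrt (2*π) / Real.sqrt (1 - 2*s) := by
  have h2 : (0:ℝ) < 1 - 2*s := by linarith
  have h : ∀ x : ℝ, Real.exp (-(x^2)/2 + s*x^2) = Real.exp (-(1/2 - s) * x^2) := by
    intro x; congr 1; ring
  simp_rw [h, integral_gaussian]
  rw [show π / (1/2 - s) = 2*π / (1 - 2*s) by rw [div_eq_div_iff (by linarith : (1/2 - s : ℝ) ≠ 0) h2.ne']; ring]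
  exact Real.sqrt_div (by positivity) _

lemma gauss_sq_integrable {s : ℝ} (hs : s < 1/2) :
    Integrable (fun x : ℝ => Real.exp (-(x^2)/2 + s*x^2)) := by
  have := integrable_exp_neg_mul_sq (show (0:ℝ) < 1/2 - s by linarith)
  apply this.congr
  filter_upwards with x
  congr 1; ring

lemma gauss_lin_key (v x : ℝ) :
    Real.exp (-(x^2)/2 + v*x) = Real.exp (v^2/2) * Real.exp (-((x - v)^2)/2) := by
  rw [← Real.exp_add]; congr 1; ring

lemma gauss_lin_integral (v : ℝ) :
    ∫ x : ℝ, Real.exp (-(x^2)/2 + v*x) = Real.sqrt (2*π) * Real.exp (v^2/2) := by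
  simp_rw [gauss_lin_key v]
  rw [integral_const_mul]
  rw [show ∫ x : ℝ, Real.exp (-((x - v)^2)/2)
      = ∫ x : ℝ, Real.exp (-(x^2)/2) from
    integral_sub_right_eq_self (fun y => Real.exp (-(y^2)/2)) v]
  rw [gauss_base]
  ring

lemma gauss_lin_integrable (v : ℝ) :
    Integrable (fun x : ℝ => Real.exp (-(x^2)/2 + v*x)) := by
  have h1 : Integrable (fun x : ℝ => Real.exp (-((x - v)^2)/2)) := by
    exact gauss_base_integrable.comp_sub_right v
  have := h1.const_mul (Real.exp (v^2/2))
  apply this.congr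
  filter_upwards with x
  rw [gauss_lin_key v]

lemma lintegral_pi_prod {m : ℕ} (f : Fin m → ℝ → ℝ) (hf : ∀ i, Integrable (f i))
    (hnn : ∀ i x, 0 ≤ f i x) :
    ∫⁻ x : Fin m → ℝ, ENNReal.ofReal (∏ i, f i (x i))
      = ENNReal.ofReal (∏ i, ∫ x, f i x) := by
  rw [← integral_fintype_prod_eq_prod (f := f)]
  rw [volume_pi, ← ofReal_integral_eq_lintegral_ofReal (Integrable.fintype_prod hf)
    (ae_of_all _ fun x => Finset.prod_nonneg fun i _ => hnn i (x i))]

lemma gauss_multi_linear {k : ℕ} (c : ℝ) (v : Fin k → ℝ) :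
    ∫⁻ g : Fin k → ℝ, ENNReal.ofReal (Real.exp (-(∑ j, (g j)^2)/2 + c * ∑ j, g j * v j))
      = ENNReal.ofReal (Real.sqrt (2*π)^k * Real.exp (c^2 * (∑ j, (v j)^2) / 2)) := by
  have hpt : ∀ g : Fin k → ℝ, Real.exp (-(∑ j, (g j)^2)/2 + c * ∑ j, g j * v j)
      = ∏ j, Real.exp (-((g j)^2)/2 + (c * v j) * (g j)) := by
    intro g
    rw [← Real.exp_sum]
    congr 1
    rw [Finset.sum_add_distrib]
    congr 1
    · rw [← Finset.sum_div]
      congr 1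
      rw [← Finset.sum_neg_distrib]
    · rw [Finset.mul_sum]
      exact Finset.sum_congr rfl fun j _ => by ring
  simp_rw [hpt]
  rw [lintegral_pi_prod _ (fun j => gauss_lin_integrable (c * v j))
    (fun j x => (Real.exp_pos _).le)]
  congr 1
  calc ∏ j, ∫ x : ℝ, Real.exp (-(x^2)/2 + (c * v j)*x)
      = ∏ j, (Real.sqrt (2*π) * Real.exp ((c * v j)^2/2)) := by
        exact Finset.prod_congr rfl fun j _ => gauss_lin_integral (c * v j)
    _ = Real.sqrt (2*π)^k * Real.exp (c^2 * (∑ j, (v j)^2) / 2) := by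
        rw [Finset.prod_mul_distrib, Finset.prod_const, ← Real.exp_sum]
        simp only [Finset.card_univ, Fintype.card_fin]
        congr 1
        rw [Finset.mul_sum, Finset.sum_div]
        exact congrArg Real.exp (Finset.sum_congr rfl fun j _ => by ring)

section quad
variable {k n : ℕ}

private lemma dot_sq (x : Fin k → ℝ) : ∑ j, (x j)^2 = x ⬝ᵥ x := by
  simp [dotProduct, pow_two]

private lemma orth_dot {U : Matrix (Fin k) (Fin k) ℝ} (hUU : Uᵀ * U = 1)
    (x y : Fin k → ℝ) : (U *ᵥ x) ⬝ᵥ (U *ᵥ y) = x ⬝ᵥ y := by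
  rw [Matrix.dotProduct_mulVec, ← Matrix.mulVec_transpose, Matrix.mulVec_mulVec, hUU,
    Matrix.one_mulVec]

lemma gauss_multi_quad (A : Matrix (Fin k) (Fin n) ℝ) {s b : ℝ}
    (hb : 0 < b) (hs : s = 1/(3*b^2))
    (hop : ∀ v : Fin n → ℝ, ∑ j, (A.mulVec v j) ^ 2 ≤ b ^ 2 * ∑ i, (v i) ^ 2) :
    ∫⁻ g : Fin k → ℝ,
        ENNReal.ofReal (Real.exp (-(∑ j, (g j)^2)/2 + s * ∑ i, (Aᵀ.mulVec g i)^2))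
      ≤ ENNReal.ofReal (Real.sqrt (2*π)^k * Real.exp (2*s*(∑ j, ∑ i, (A j i)^2))) := by
  classical
  have hconj : ∀ {p q : ℕ} (B : Matrix (Fin p) (Fin q) ℝ), Bᴴ = Bᵀ := fun B =>
    Matrix.conjTranspose_eq_transpose_of_trivial B
  set M : Matrix (Fin k) (Fin k) ℝ := A * Aᵀ with hMdef
  have hM : M.IsHermitian := by
    rw [hMdef, ← hconj A]; exact isHermitian_mul_conjTranspose_self A
  set μ : Fin k → ℝ := hM.eigenvalues with hμdef
  have hμnn : ∀ j, 0 ≤ μ j := by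
    intro j
    have := Matrix.eigenvalues_self_mul_conjTranspose_nonneg A (𝕜 := ℝ) j
    convert this using 2 <;> rw [hconj A]
  -- eigenvalue ≤ b^2
  have hμle : ∀ j, μ j ≤ b^2 := by
    intro j
    have hw := hM.eigenvalues_eq j
    set w : Fin k → ℝ := ⇑(hM.eigenvectorBasis j) with hwdef
    have hwnorm : ∑ i, (w i)^2 = 1 := by
      have h1 : ‖hM.eigenvectorBasis j‖ = 1 := hM.eigenvectorBasis.orthonormal.1 j
      have h2 : ‖hM.eigenvectorBasis j‖ = Real.sqrt (∑ i, (w i)^2) := by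
        rw [EuclideanSpace.norm_eq]
        congr 1
        exact Finset.sum_congr rfl fun i _ => by rw [Real.norm_eq_abs, sq_abs]
      rw [h2] at h1
      have hnn : (0:ℝ) ≤ ∑ i : Fin k, (w i)^2 := Finset.sum_nonneg fun i _ => sq_nonneg (w i)
      nlinarith [Real.sq_sqrt hnn, Real.sqrt_nonneg (∑ i : Fin k, (w i)^2)]
    have hμeq : μ j = ∑ i, ((Aᵀ *ᵥ w) i)^2 := by
      rw [hμdef, hw]
      simp only [RCLike.re_to_real, star_trivial]
      rw [dot_sq (Aᵀ *ᵥ w), Matrix.dotProduct_mulVec (Aᵀ *ᵥ w) Aᵀ w,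
        ← Matrix.mulVec_transpose, Matrix.transpose_transpose]
      rw [show M *ᵥ w = A *ᵥ (Aᵀ *ᵥ w) by rw [hMdef, ← Matrix.mulVec_mulVec]]
      rw [dotProduct_comm]
    set Q : ℝ := ∑ i, ((Aᵀ *ᵥ w) i)^2 with hQ
    have hQnn : 0 ≤ Q := Finset.sum_nonneg fun i _ => sq_nonneg _
    have hcs : Q^2 ≤ 1 * (b^2 * Q) := by
      have h1 : Q = w ⬝ᵥ (A *ᵥ (Aᵀ *ᵥ w)) := by
        rw [hQ, dot_sq, Matrix.dotProduct_mulVec w A (Aᵀ *ᵥ w), ← Matrix.mulVec_transpose]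
      have h2 : (w ⬝ᵥ (A *ᵥ (Aᵀ *ᵥ w)))^2
          ≤ (∑ i, (w i)^2) * (∑ j', ((A *ᵥ (Aᵀ *ᵥ w)) j')^2) :=
        Finset.sum_mul_sq_le_sq_mul_sq Finset.univ w (A *ᵥ (Aᵀ *ᵥ w))
      calc Q^2 = (w ⬝ᵥ (A *ᵥ (Aᵀ *ᵥ w)))^2 := by rw [h1]
        _ ≤ (∑ i, (w i)^2) * (∑ j', ((A *ᵥ (Aᵀ *ᵥ w)) j')^2) := h2
        _ ≤ 1 * (b^2 * Q) := by
            rw [hwnorm]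
            exact mul_le_mul_of_nonneg_left (hop (Aᵀ *ᵥ w)) zero_le_one
    rw [hμeq]
    nlinarith [hcs, hQnn]
  -- trace identity
  have htrace : ∑ j, μ j = ∑ j, ∑ i, (A j i)^2 := by
    have h1 : M.trace = ∑ j, μ j := by
      have hsp := hM.spectral_theorem
      rw [Unitary.conjStarAlgAut_apply] at hsp
      set U : Matrix (Fin k) (Fin k) ℝ := (hM.eigenvectorUnitary : Matrix (Fin k) (Fin k) ℝ)
      have hUU : star U * U = 1 := ((Unitary.mem_iff).mp hM.eigenvectorUnitary.2).1
      calc M.trace = (U * Matrix.diagonal (RCLike.ofReal ∘ μ) * star U).trace := by rw [← hsp]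
        _ = (star U * (U * Matrix.diagonal (RCLike.ofReal ∘ μ))).trace := Matrix.trace_mul_comm _ _
        _ = (Matrix.diagonal (RCLike.ofReal ∘ μ)).trace := by
            rw [← Matrix.mul_assoc, hUU, Matrix.one_mul]
        _ = ∑ j, μ j := by
            rw [Matrix.trace_diagonal]
            exact Finset.sum_congr rfl fun j _ => rfl
    rw [← h1, Matrix.trace]
    refine Finset.sum_congr rfl fun j _ => ?_
    rw [hMdef]
    simp [Matrix.mul_apply, Matrix.diag, pow_two]
  -- unitary change of variables
  set U : Matrix (Fin k) (Fin k) ℝ := (hM.eigenvectorUnitary : Matrix (Fin k) (Fin k) ℝ)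
    with hUdef
  have hUU : star U * U = 1 := ((Unitary.mem_iff).mp hM.eigenvectorUnitary.2).1
  have hUUt : Uᵀ * U = 1 := by
    rw [← hconj U, ← Matrix.star_eq_conjTranspose]; exact hUU
  have hdet2 : U.det * U.det = 1 := by
    have h := congrArg Matrix.det hUU
    rw [Matrix.det_mul, Matrix.det_one, Matrix.star_eq_conjTranspose, hconj U,
      Matrix.det_transpose] at h
    exact h
  have hdetne : U.det ≠ 0 := by
    intro h; rw [h] at hdet2; norm_num at hdet2
  have hmap : Measure.map (Matrix.toLin' U) volume = volume := by
    rw [Real.map_matrix_volume_pi_eq_smul_volume_pi hdetne]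
    have habs : |U.det⁻¹| = 1 := by
      rcases mul_self_eq_one_iff.mp hdet2 with h|h <;> rw [h] <;> norm_num
    rw [habs]
    simp
  have hTmeas : Measurable (Matrix.toLin' U) :=
    Continuous.measurable (LinearMap.continuous_on_pi _)
  have hFmeas : Measurable (fun g : Fin k → ℝ =>
      ENNReal.ofReal (Real.exp (-(∑ j, (g j)^2)/2 + s * ∑ i, (Aᵀ.mulVec g i)^2))) := by
    have hm1 : Measurable fun g : Fin k → ℝ => ∑ j, (g j)^2 :=
      Finset.measurable_sum _ (fun j _ => (measurable_pi_apply j).pow_const 2)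
    have hm2 : Measurable fun g : Fin k → ℝ => ∑ i, (Aᵀ.mulVec g i)^2 := by
      apply Finset.measurable_sum
      intro i _
      have : Measurable fun g : Fin k → ℝ => Aᵀ.mulVec g i := by
        simp only [Matrix.mulVec, dotProduct]
        exact Finset.measurable_sum _ (fun j _ => (measurable_pi_apply j).const_mul _)
      exact this.pow_const 2
    exact (Real.measurable_exp.comp
      ((hm1.neg.div_const 2).add (hm2.const_mul s))).ennreal_ofReal
  have hsub : ∫⁻ g : Fin k → ℝ,
        ENNReal.ofReal (Real.exp (-(∑ j, (g j)^2)/2 + s * ∑ i, (Aᵀ.mulVec g i)^2))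
      = ∫⁻ h : Fin k → ℝ,
        ENNReal.ofReal (Real.exp (-(∑ j, ((U *ᵥ h) j)^2)/2
          + s * ∑ i, (Aᵀ.mulVec (U *ᵥ h) i)^2)) := by
    conv_lhs => rw [← hmap]
    rw [lintegral_map hFmeas hTmeas]
    refine lintegral_congr fun h => ?_
    rw [Matrix.toLin'_apply]
  -- diagonalization identities
  have hMU : M * U = U * Matrix.diagonal μ := by
    have hdiag : Matrix.diagonal (RCLike.ofReal ∘ μ) = Matrix.diagonal μ := by
      congr 1
    conv_lhs => rw [hM.spectral_theorem, Unitary.conjStarAlgAut_apply]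
    rw [hdiag, Matrix.mul_assoc, Matrix.mul_assoc, hUU, Matrix.mul_one]
  have e1 : ∀ h : Fin k → ℝ, ∑ j, ((U *ᵥ h) j)^2 = ∑ j, (h j)^2 := by
    intro h
    rw [dot_sq, dot_sq, orth_dot hUUt]
  have e2 : ∀ h : Fin k → ℝ, ∑ i, ((Aᵀ.mulVec (U *ᵥ h)) i)^2 = ∑ j, μ j * (h j)^2 := by
    intro h
    rw [dot_sq]
    rw [Matrix.dotProduct_mulVec (Aᵀ *ᵥ (U *ᵥ h)) Aᵀ (U *ᵥ h), ← Matrix.mulVec_transpose,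
      Matrix.transpose_transpose, Matrix.mulVec_mulVec, dotProduct_comm]
    rw [show A * Aᵀ = M from rfl, Matrix.mulVec_mulVec, hMU, ← Matrix.mulVec_mulVec,
      orth_dot hUUt]
    simp [dotProduct, Matrix.mulVec_diagonal, pow_two]
    exact Finset.sum_congr rfl fun j _ => by ring
  have hsμ : ∀ j, s * μ j ≤ 1/3 := by
    intro j
    rw [hs]
    rw [div_mul_eq_mul_div, one_mul, div_le_div_iff₀ (by nlinarith [hb] : (0:ℝ) < 3*b^2) (by norm_num : (0:ℝ) < 3)]
    nlinarith [hμle j]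
  have hsnn : 0 ≤ s := by rw [hs]; positivity
  have hprod : ∀ h : Fin k → ℝ,
      Real.exp (-(∑ j, (h j)^2)/2 + s * ∑ j, μ j * (h j)^2)
      = ∏ j, Real.exp (-((h j)^2)/2 + (s * μ j) * (h j)^2) := by
    intro h
    rw [← Real.exp_sum]
    congr 1
    rw [Finset.sum_add_distrib]
    congr 1
    · rw [← Finset.sum_div]
      congr 1
      rw [← Finset.sum_neg_distrib]
    · rw [Finset.mul_sum]
      exact Finset.sum_congr rfl fun j _ => by ring
  calc ∫⁻ g : Fin k → ℝ,
        ENNReal.ofReal (Real.exp (-(∑ j, (g j)^2)/2 + s * ∑ i, (Aᵀ.mulVec g i)^2))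
      = ∫⁻ h : Fin k → ℝ,
        ENNReal.ofReal (∏ j, Real.exp (-((h j)^2)/2 + (s * μ j) * (h j)^2)) := by
        rw [hsub]
        refine lintegral_congr fun h => ?_
        rw [e1 h, e2 h, hprod h]
    _ = ENNReal.ofReal (∏ j, ∫ x : ℝ, Real.exp (-(x^2)/2 + (s * μ j) * x^2)) := by
        exact lintegral_pi_prod _ (fun j => gauss_sq_integrable (by linarith [hsμ j]))
          (fun j x => (Real.exp_pos _).le)
    _ ≤ ENNReal.ofReal (Real.sqrt (2*π)^k * Real.exp (2*s*(∑ j, ∑ i, (A j i)^2))) := by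
        apply ENNReal.ofReal_le_ofReal
        calc ∏ j, ∫ x : ℝ, Real.exp (-(x^2)/2 + (s * μ j) * x^2)
            = ∏ j, (Real.sqrt (2*π) / Real.sqrt (1 - 2*(s * μ j))) := by
              exact Finset.prod_congr rfl fun j _ =>
                gauss_sq_integral (by linarith [hsμ j])
          _ ≤ ∏ j, (Real.sqrt (2*π) * Real.exp (2*(s * μ j))) := by
              apply Finset.prod_le_prod
              · intro j _
                exact div_nonneg (Real.sqrt_nonneg _) (Real.sqrt_nonneg _)
              · intro j _
                have h1 : 0 ≤ 2*(s*μ j) := by nlinarith [hsnn, hμnn j]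
                have h2 : 2*(s*μ j) ≤ 2/3 := by linarith [hsμ j]
                have := aux_sqrt_factor h1 h2
                calc Real.sqrt (2*π) / Real.sqrt (1 - 2*(s * μ j))
                    = Real.sqrt (2*π) / Real.sqrt (1 - 2*(s * μ j)) := rfl
                  _ ≤ Real.sqrt (2*π) * Real.exp (2*(s*μ j)) := this
          _ = Real.sqrt (2*π)^k * Real.exp (2*s*(∑ j, ∑ i, (A j i)^2)) := by
              rw [Finset.prod_mul_distrib, Finset.prod_const, ← Real.exp_sum]
              simp only [Finset.card_univ, Fintype.card_fin]
              congr 1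
              rw [← htrace, Finset.mul_sum]
              exact congrArg Real.exp (Finset.sum_congr rfl fun j _ => by ring)

end quad

theorem stmt3 {Ω : Type*} [MeasureSpace Ω] [IsProbabilityMeasure (ℙ : Measure Ω)]
    {n k : ℕ} (a : Fin n → Ω → ℝ) (θ : Fin n → ℝ)
    (hmeas : ∀ i, Measurable (a i))
    (hindep : iIndepFun a ℙ)
    (hval : ∀ i ω, a i ω = 0 ∨ a i ω = 1)
    (hθ : ∀ i, (ℙ {ω | a i ω = 1}).toReal = θ i)
    (A : Matrix (Fin k) (Fin n) ℝ) (opA : ℝ) (hopA : 0 ≤ opA)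
    (hop : ∀ v : Fin n → ℝ, ∑ j, (A.mulVec v j) ^ 2 ≤ opA ^ 2 * ∑ i, (v i) ^ 2)
    (t : ℝ) (ht : 0 < t) :
    ℙ {ω | (∑ j, ∑ i, (A j i) ^ 2) / 2 + 3 * t / 4 * opA ^ 2
        < ∑ j, (A.mulVec (fun i => a i ω - θ i) j) ^ 2}
      ≤ ENNReal.ofReal (Real.exp (-t)) := by
  rcases hopA.eq_or_lt with hb0|hb
  -- degenerate case opA = 0
  · have hA0 : ∀ j i, A j i = 0 := by
      intro j i
      have h := hop (Pi.single i 1)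
      rw [← hb0] at h
      have h2 : ∑ j', (A.mulVec (Pi.single i 1) j') ^ 2 ≤ 0 := by
        calc ∑ j', (A.mulVec (Pi.single i 1) j') ^ 2
            ≤ 0^2 * ∑ i', (Pi.single i 1 : Fin n → ℝ) i' ^2 := h
          _ = 0 := by norm_num
      have h3 : (A.mulVec (Pi.single i 1) j) ^ 2 = 0 := by
        have := Finset.sum_nonneg (s := Finset.univ)
          (f := fun j' => (A.mulVec (Pi.single i 1) j') ^ 2) (fun j' _ => sq_nonneg _)
        have h4 : ∑ j', (A.mulVec (Pi.single i 1) j') ^ 2 = 0 := le_antisymm h2 this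
        exact (Finset.sum_eq_zero_iff_of_nonneg (fun j' _ => sq_nonneg _)).mp h4 j
          (Finset.mem_univ j)
      have h5 : A.mulVec (Pi.single i 1) j = 0 := by
        exact pow_eq_zero_iff (by norm_num) |>.mp h3
      rw [Matrix.mulVec_single] at h5
      simpa using h5
    have hempty : {ω | (∑ j, ∑ i, (A j i) ^ 2) / 2 + 3 * t / 4 * opA ^ 2
        < ∑ j, (A.mulVec (fun i => a i ω - θ i) j) ^ 2} = ∅ := by
      ext ω
      simp only [Set.mem_setOf_eq, Set.mem_empty_iff_false, iff_false, not_lt]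
      have h1 : ∀ j, A.mulVec (fun i => a i ω - θ i) j = 0 := by
        intro j
        simp only [Matrix.mulVec, dotProduct]
        exact Finset.sum_eq_zero fun i _ => by rw [hA0 j i, zero_mul]
      have h2 : ∑ j, (A.mulVec (fun i => a i ω - θ i) j) ^ 2 = 0 :=
        Finset.sum_eq_zero fun j _ => by rw [h1 j]; norm_num
      rw [h2, ← hb0]
      have : ∑ j, ∑ i, (A j i)^2 = 0 :=
        Finset.sum_eq_zero fun j _ => Finset.sum_eq_zero fun i _ => by rw [hA0 j i]; norm_num
      rw [this]
      norm_num
    rw [hempty]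
    simp
  -- main case
  · set b := opA
    set ξ : Ω → Fin n → ℝ := fun ω i => a i ω - θ i with hξ
    set X : Ω → ℝ := fun ω => ∑ j, (A.mulVec (ξ ω) j) ^ 2 with hX
    set F2 : ℝ := ∑ j, ∑ i, (A j i) ^ 2 with hF2
    have hF2nn : 0 ≤ F2 :=
      Finset.sum_nonneg fun j _ => Finset.sum_nonneg fun i _ => sq_nonneg _
    set u : ℝ := F2 / 2 + 3 * t / 4 * b ^ 2 with hu
    set l : ℝ := 4 / (3 * b^2) with hl
    have hlpos : 0 < l := by rw [hl]; positivity
    set c : ℝ := Real.sqrt (2*l) with hc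
    have hc2 : c^2 = 2*l := Real.sq_sqrt (by positivity)
    set s : ℝ := l/4 with hs
    have hs' : s = 1/(3*b^2) := by rw [hs, hl]; ring
    have hXmeas : Measurable X := by
      apply Finset.measurable_sum
      intro j _
      have : Measurable fun ω => A.mulVec (ξ ω) j := by
        simp only [Matrix.mulVec, dotProduct, hξ]
        exact Finset.measurable_sum _ fun i _ =>
          ((hmeas i).sub_const (θ i)).const_mul (A j i)
      exact this.pow_const 2
    have hXnn : ∀ ω, 0 ≤ X ω := fun ω => Finset.sum_nonneg fun j _ => sq_nonneg _
    -- Chernoff bound skeleton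
    have hset : MeasurableSet {ω | u < X ω} := measurableSet_lt measurable_const hXmeas
    have step1 : ℙ {ω | u < X ω}
        ≤ ENNReal.ofReal (Real.exp (-(l*u))) * ∫⁻ ω, ENNReal.ofReal (Real.exp (l * X ω)) ∂ℙ := by
      have hmono : ℙ {ω | u < X ω} ≤ ∫⁻ ω, ENNReal.ofReal (Real.exp (l * (X ω - u))) ∂ℙ := by
        calc ℙ {ω | u < X ω} = ∫⁻ _ in {ω | u < X ω}, 1 ∂ℙ := (setLIntegral_one _).symm
          _ ≤ ∫⁻ ω in {ω | u < X ω}, ENNReal.ofReal (Real.exp (l * (X ω - u))) ∂ℙ := by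
              apply setLIntegral_mono
              · exact (Real.measurable_exp.comp
                  ((hXmeas.sub_const u).const_mul l)).ennreal_ofReal
              · intro ω hω
                rw [show (1:ENNReal) = ENNReal.ofReal 1 by simp]
                apply ENNReal.ofReal_le_ofReal
                rw [Real.one_le_exp_iff]
                have : u < X ω := hω
                nlinarith [hlpos]
          _ ≤ ∫⁻ ω, ENNReal.ofReal (Real.exp (l * (X ω - u))) ∂ℙ := by
              exact setLIntegral_le_lintegral _ _
      calc ℙ {ω | u < X ω} ≤ ∫⁻ ω, ENNReal.ofReal (Real.exp (l * (X ω - u))) ∂ℙ := hmono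
        _ = ∫⁻ ω, ENNReal.ofReal (Real.exp (-(l*u))) * ENNReal.ofReal (Real.exp (l * X ω)) ∂ℙ := by
            refine lintegral_congr fun ω => ?_
            rw [← ENNReal.ofReal_mul (Real.exp_pos _).le, ← Real.exp_add]
            congr 2
            ring
        _ = ENNReal.ofReal (Real.exp (-(l*u))) * ∫⁻ ω, ENNReal.ofReal (Real.exp (l * X ω)) ∂ℙ :=
            lintegral_const_mul' _ _ ENNReal.ofReal_ne_top
    -- KEY MGF bound
    have key : ∫⁻ ω, ENNReal.ofReal (Real.exp (l * X ω)) ∂ℙ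
        ≤ ENNReal.ofReal (Real.exp (l * F2 / 2)) := by
      set Z : ℝ := Real.sqrt (2*π)^k with hZ
      have hZpos : 0 < Z := pow_pos (Real.sqrt_pos.mpr (by positivity)) k
      rw [← ENNReal.mul_le_mul_iff_right (a := ENNReal.ofReal Z)
        (ENNReal.ofReal_pos.mpr hZpos).ne' ENNReal.ofReal_ne_top]
      -- joint measurability
      have hjoint : Measurable fun p : Ω × (Fin k → ℝ) =>
          ENNReal.ofReal (Real.exp (-(∑ j, (p.2 j)^2)/2
            + c * ∑ j, p.2 j * (A.mulVec (ξ p.1)) j)) := by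
        have hm1 : Measurable fun p : Ω × (Fin k → ℝ) => ∑ j, (p.2 j)^2 :=
          Finset.measurable_sum _ fun j _ =>
            ((measurable_pi_apply j).comp measurable_snd).pow_const 2
        have hm2 : Measurable fun p : Ω × (Fin k → ℝ) =>
            ∑ j, p.2 j * (A.mulVec (ξ p.1)) j := by
          apply Finset.measurable_sum
          intro j _
          apply Measurable.mul
          · exact (measurable_pi_apply j).comp measurable_snd
          · simp only [Matrix.mulVec, dotProduct, hξ]
            exact Finset.measurable_sum _ fun i _ =>
              (((hmeas i).comp measurable_fst).sub_const (θ i)).const_mul (A j i)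
        exact (Real.measurable_exp.comp
          ((hm1.neg.div_const 2).add (hm2.const_mul c))).ennreal_ofReal
      calc ENNReal.ofReal Z * ∫⁻ ω, ENNReal.ofReal (Real.exp (l * X ω)) ∂ℙ
          = ∫⁻ ω, ENNReal.ofReal Z * ENNReal.ofReal (Real.exp (l * X ω)) ∂ℙ :=
            (lintegral_const_mul' _ _ ENNReal.ofReal_ne_top).symm
        _ = ∫⁻ ω, ∫⁻ g : Fin k → ℝ, ENNReal.ofReal (Real.exp (-(∑ j, (g j)^2)/2
              + c * ∑ j, g j * (A.mulVec (ξ ω)) j)) ∂ℙ := by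
            refine lintegral_congr fun ω => ?_
            rw [gauss_multi_linear c (A.mulVec (ξ ω)), ← ENNReal.ofReal_mul hZpos.le, ← hZ]
            congr 2
            rw [hc2]
            have hXω : X ω = ∑ j, ((A.mulVec (ξ ω)) j)^2 := rfl
            rw [hXω]
            ring
        _ = ∫⁻ g : Fin k → ℝ, ∫⁻ ω, ENNReal.ofReal (Real.exp (-(∑ j, (g j)^2)/2
              + c * ∑ j, g j * (A.mulVec (ξ ω)) j)) ∂ℙ ∂(volume : Measure (Fin k → ℝ)) := by
            exact lintegral_lintegral_swap hjoint.aemeasurable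
        _ ≤ ∫⁻ g : Fin k → ℝ, ENNReal.ofReal (Real.exp (-(∑ j, (g j)^2)/2
              + s * ∑ i, (Aᵀ.mulVec g i)^2)) := by
            apply lintegral_mono
            intro g
            set z : Fin n → ℝ := fun i => c * ∑ j, g j * A j i with hz
            have hlin : ∀ ω, c * ∑ j, g j * (A.mulVec (ξ ω)) j
                = ∑ i, z i * (a i ω - θ i) := by
              intro ω
              simp only [Matrix.mulVec, dotProduct, hz, hξ]
              rw [Finset.mul_sum]
              simp_rw [Finset.mul_sum, Finset.sum_mul]
              rw [Finset.sum_comm]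
              exact Finset.sum_congr rfl fun i _ =>
                Finset.sum_congr rfl fun j _ => by ring
            have hzsq : ∑ i, (z i)^2 / 8 = s * ∑ i, (Aᵀ.mulVec g i)^2 := by
              rw [Finset.mul_sum]
              refine Finset.sum_congr rfl fun i _ => ?_
              simp only [hz, Matrix.mulVec, dotProduct, Matrix.transpose_apply]
              rw [mul_pow, hc2]
              rw [show ∑ j, g j * A j i = ∑ j, A j i * g j from
                Finset.sum_congr rfl fun j _ => mul_comm _ _]
              rw [hs]
              ring
            calc ∫⁻ ω, ENNReal.ofReal (Real.exp (-(∑ j, (g j)^2)/2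
                  + c * ∑ j, g j * (A.mulVec (ξ ω)) j)) ∂ℙ
                = ENNReal.ofReal (Real.exp (-(∑ j, (g j)^2)/2))
                  * ∫⁻ ω, ENNReal.ofReal (Real.exp (∑ i, z i * (a i ω - θ i))) ∂ℙ := by
                  rw [← lintegral_const_mul' _ _ ENNReal.ofReal_ne_top]
                  refine lintegral_congr fun ω => ?_
                  rw [← ENNReal.ofReal_mul (Real.exp_pos _).le, ← Real.exp_add, hlin ω]
              _ ≤ ENNReal.ofReal (Real.exp (-(∑ j, (g j)^2)/2))
                  * ENNReal.ofReal (Real.exp (∑ i, (z i)^2 / 8)) := by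
                  exact mul_le_mul_right (lintegral_exp_linear_le hmeas hindep hval hθ z) _
              _ = ENNReal.ofReal (Real.exp (-(∑ j, (g j)^2)/2
                  + s * ∑ i, (Aᵀ.mulVec g i)^2)) := by
                  rw [← ENNReal.ofReal_mul (Real.exp_pos _).le, ← Real.exp_add, hzsq]
        _ ≤ ENNReal.ofReal (Z * Real.exp (2*s*F2)) := by
            rw [hZ, hF2]
            exact gauss_multi_quad A hb hs' hop
        _ = ENNReal.ofReal Z * ENNReal.ofReal (Real.exp (l * F2 / 2)) := by
            rw [← ENNReal.ofReal_mul hZpos.le]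
            congr 2
            rw [hs]
            ring
    -- combine
    calc ℙ {ω | (∑ j, ∑ i, (A j i) ^ 2) / 2 + 3 * t / 4 * opA ^ 2
        < ∑ j, (A.mulVec (fun i => a i ω - θ i) j) ^ 2} = ℙ {ω | u < X ω} := rfl
      _ ≤ ENNReal.ofReal (Real.exp (-(l*u))) * ∫⁻ ω, ENNReal.ofReal (Real.exp (l * X ω)) ∂ℙ :=
          step1
      _ ≤ ENNReal.ofReal (Real.exp (-(l*u))) * ENNReal.ofReal (Real.exp (l * F2 / 2)) :=
          mul_le_mul_right key _
      _ = ENNReal.ofReal (Real.exp (-(l*u)) * Real.exp (l * F2 / 2)) :=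
          (ENNReal.ofReal_mul (Real.exp_pos _).le).symm
      _ = ENNReal.ofReal (Real.exp (-t)) := by
        rw [← Real.exp_add]
        congr 1
        rw [hu]
        have hbne : b ≠ 0 := ne_of_gt hb
        rw [hl]
        field_simp
        congr 2; field_simp; ring
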